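/- Let G be a finite simple graph on a vertex set V without isolated vertices, let 𝓛 be its normalized Laplacian acting on functions V → ℂ, and let ω ≥ 0. Then a function f : V → ℂ belongs to the Paley–Wiener space PW_ω(G) if and only if for every natural number n the Bernstein inequality ‖𝓛ⁿ f‖ ≤ ωⁿ·‖f‖ holds, where ‖g‖ = (∑_{v∈V} |g(v)|²)^{1/2}. -/

import Mathlib

/-- The normalized Laplacian of a finite simple graph as a linear endomorphism of `V → ℂ`:
`(𝓛 f) v = f v − ∑_{u ∼ v} f u / √(d u · d v)`. -/
noncomputable def nLapL {V : Type*} [Fintype V] (G : SimpleGraph V) [DecidableRel G.Adj] :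
    (V → ℂ) →ₗ[ℂ] (V → ℂ) where
  toFun f := fun v =>
    f v - ∑ u ∈ G.neighborFinset v, f u / (Real.sqrt ((G.degree u : ℝ) * (G.degree v : ℝ)) : ℂ)
  map_add' f g := by
    funext v
    simp only [Pi.add_apply, add_div, Finset.sum_add_distrib]
    ring
  map_smul' a f := by
    funext v
    simp only [Pi.smul_apply, smul_eq_mul, RingHom.id_apply, mul_sub, Finset.mul_sum,
      mul_div_assoc]

section Aux

variable {V : Type*} [Fintype V] (G : SimpleGraph V) [DecidableRel G.Adj]

noncomputable def TT {V : Type*} [Fintype V] (G : SimpleGraph V) [DecidableRel G.Adj] :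
    EuclideanSpace ℂ V →ₗ[ℂ] EuclideanSpace ℂ V :=
  (WithLp.linearEquiv 2 ℂ (V → ℂ)).symm.toLinearMap ∘ₗ nLapL G ∘ₗ
    (WithLp.linearEquiv 2 ℂ (V → ℂ)).toLinearMap

lemma mem_eig_iff {V : Type*} [Fintype V] (G : SimpleGraph V) [DecidableRel G.Adj]
    (c : ℂ) (x : V → ℂ) : x ∈ Module.End.eigenspace (nLapL G) c ↔
      WithLp.toLp 2 x ∈ Module.End.eigenspace (TT G) c := by
  simp only [Module.End.mem_eigenspace_iff]
  constructor
  · intro h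
    change WithLp.toLp 2 (nLapL G x) = _
    rw [h]
    rfl
  · intro h
    exact congrArg WithLp.ofLp h

lemma TT_pow_apply {V : Type*} [Fintype V] (G : SimpleGraph V) [DecidableRel G.Adj]
    (n : ℕ) (x : V → ℂ) : (TT G ^ n) (WithLp.toLp 2 x) = WithLp.toLp 2 ((nLapL G ^ n) x) := by
  induction n with
  | zero => rfl
  | succ n ih =>
    rw [pow_succ', Module.End.mul_apply, ih, pow_succ', Module.End.mul_apply]
    rfl

lemma nbhd_swap {M : Type*} [AddCommMonoid M] (F : V → V → M) :
    ∑ v, ∑ u ∈ G.neighborFinset v, F u v = ∑ v, ∑ u ∈ G.neighborFinset v, F v u := by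
  simp only [SimpleGraph.neighborFinset_eq_filter, Finset.sum_filter]
  rw [Finset.sum_comm]
  congr 1; ext v; congr 1; ext u
  by_cases h : G.Adj u v
  · rw [if_pos h, if_pos h.symm]
  · rw [if_neg h, if_neg (fun h' => h h'.symm)]

lemma TT_apply (f : EuclideanSpace ℂ V) (v : V) :
    TT G f v = f v - ∑ u ∈ G.neighborFinset v,
      f u / (Real.sqrt ((G.degree u : ℝ) * (G.degree v : ℝ)) : ℂ) := rfl

lemma inner_TT_eq (f : EuclideanSpace ℂ V) :
    (inner ℂ (TT G f) f : ℂ) = (∑ v, (‖f v‖:ℂ)^2)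
      - ∑ v, ∑ u ∈ G.neighborFinset v,
          (starRingEnd ℂ) (f u) * f v / (Real.sqrt ((G.degree u : ℝ) * (G.degree v : ℝ)) : ℂ) := by
  simp only [PiLp.inner_apply, RCLike.inner_apply', TT_apply, map_sub, map_sum, sub_mul]
  rw [Finset.sum_sub_distrib]
  congr 1
  · exact Finset.sum_congr rfl fun v _ => by rw [RCLike.conj_mul]; norm_num
  · simp_rw [Finset.sum_mul, map_div₀, Complex.conj_ofReal, div_mul_eq_mul_div]

lemma inner_TT_re_nonneg (hdeg : ∀ v : V, 0 < G.degree v) (f : EuclideanSpace ℂ V) :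
    0 ≤ (inner ℂ (TT G f) f : ℂ).re := by
  set g : V → ℂ := fun v => f v / (Real.sqrt (G.degree v) : ℂ) with hg
  have hnormg : ∀ v, ‖g v‖^2 = ‖f v‖^2 / (G.degree v : ℝ) := by
    intro v
    rw [hg]
    simp only
    rw [norm_div, Complex.norm_real, Real.norm_of_nonneg (Real.sqrt_nonneg _), div_pow,
      Real.sq_sqrt (Nat.cast_nonneg _)]
  have hgg : ∀ u v : V, (starRingEnd ℂ) (g u) * g v
      = (starRingEnd ℂ) (f u) * f v / (Real.sqrt ((G.degree u : ℝ) * (G.degree v : ℝ)) : ℂ) := by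
    intro u v
    rw [hg]
    simp only [map_div₀, Complex.conj_ofReal]
    rw [div_mul_div_comm, Real.sqrt_mul (Nat.cast_nonneg _), Complex.ofReal_mul]
  have hterm : ∀ u v : V, ‖g u - g v‖^2
      = ‖g u‖^2 + ‖g v‖^2 - 2 * ((starRingEnd ℂ) (f u) * f v
          / (Real.sqrt ((G.degree u : ℝ) * (G.degree v : ℝ)) : ℂ)).re := by
    intro u v
    rw [← hgg]
    have := @norm_sub_sq ℂ ℂ _ _ _ (g u) (g v)
    rw [this, RCLike.inner_apply']
    simp only [RCLike.re_to_complex]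
    ring
  have hsum_gv : ∑ v, ∑ _u ∈ G.neighborFinset v, ‖g v‖^2 = ∑ v, ‖f v‖^2 := by
    refine Finset.sum_congr rfl fun v _ => ?_
    rw [Finset.sum_const, SimpleGraph.card_neighborFinset_eq_degree, nsmul_eq_mul, hnormg,
      mul_div_cancel₀]
    exact_mod_cast (hdeg v).ne'
  have hsum_gu : ∑ v, ∑ u ∈ G.neighborFinset v, ‖g u‖^2
      = ∑ v, ‖f v‖^2 := by
    rw [nbhd_swap G (fun u v => ‖g u‖^2)]
    exact hsum_gv
  have key : ∑ v, ∑ u ∈ G.neighborFinset v, ‖g u - g v‖^2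
      = 2 * (inner ℂ (TT G f) f : ℂ).re := by
    have hre : (inner ℂ (TT G f) f : ℂ).re = (∑ v, ‖f v‖^2)
        - ∑ v, ∑ u ∈ G.neighborFinset v,
            ((starRingEnd ℂ) (f u) * f v
              / (Real.sqrt ((G.degree u : ℝ) * (G.degree v : ℝ)) : ℂ)).re := by
      rw [inner_TT_eq, Complex.sub_re]
      congr 1
      · rw [Complex.re_sum]
        exact Finset.sum_congr rfl fun v _ => by
          rw [← Complex.ofReal_pow, Complex.ofReal_re]
      · rw [Complex.re_sum]
        exact Finset.sum_congr rfl fun v _ => Complex.re_sum _ _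
    calc ∑ v, ∑ u ∈ G.neighborFinset v, ‖g u - g v‖^2
        = ∑ v, ∑ u ∈ G.neighborFinset v, (‖g u‖^2 + ‖g v‖^2
            - 2 * ((starRingEnd ℂ) (f u) * f v
              / (Real.sqrt ((G.degree u : ℝ) * (G.degree v : ℝ)) : ℂ)).re) := by
          exact Finset.sum_congr rfl fun v _ => Finset.sum_congr rfl fun u _ => hterm u v
      _ = 2 * (inner ℂ (TT G f) f : ℂ).re := by
          simp only [Finset.sum_sub_distrib, Finset.sum_add_distrib, hsum_gv, hsum_gu,
            ← Finset.mul_sum, hre]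
          ring
  have hnn : 0 ≤ ∑ v, ∑ u ∈ G.neighborFinset v, ‖g u - g v‖^2 :=
    Finset.sum_nonneg fun v _ => Finset.sum_nonneg fun u _ => sq_nonneg _
  linarith [key ▸ hnn]

lemma TT_symm : (TT G).IsSymmetric := by
  intro f g
  simp only [PiLp.inner_apply, RCLike.inner_apply', TT_apply, map_sub, map_sum, sub_mul, mul_sub]
  rw [Finset.sum_sub_distrib, Finset.sum_sub_distrib]
  congr 1
  calc ∑ v, (∑ u ∈ G.neighborFinset v,
          (starRingEnd ℂ) (f u / (Real.sqrt ((G.degree u : ℝ) * (G.degree v : ℝ)) : ℂ))) * g v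
      = ∑ v, ∑ u ∈ G.neighborFinset v,
          (starRingEnd ℂ) (f u) * g v / (Real.sqrt ((G.degree u : ℝ) * (G.degree v : ℝ)) : ℂ) := by
        simp_rw [Finset.sum_mul, map_div₀, Complex.conj_ofReal, div_mul_eq_mul_div]
    _ = ∑ v, ∑ u ∈ G.neighborFinset v,
          (starRingEnd ℂ) (f v) * g u / (Real.sqrt ((G.degree v : ℝ) * (G.degree u : ℝ)) : ℂ) :=
        nbhd_swap G _
    _ = ∑ v, (starRingEnd ℂ) (f v) * ∑ u ∈ G.neighborFinset v,
          g u / (Real.sqrt ((G.degree u : ℝ) * (G.degree v : ℝ)) : ℂ) := by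
        simp_rw [Finset.mul_sum, mul_div_assoc]
        exact Finset.sum_congr rfl fun v _ => Finset.sum_congr rfl fun u _ => by
          rw [mul_comm ((G.degree v : ℝ)) ((G.degree u : ℝ))]

end Aux

/-- The Paley–Wiener space `PW_ω(G)`: the span (supremum) of the eigenspaces of the normalized
Laplacian corresponding to (real) eigenvalues `μ ≤ ω`. -/
noncomputable def PW {V : Type*} [Fintype V] (G : SimpleGraph V) [DecidableRel G.Adj] (ω : ℝ) :
    Submodule ℂ (V → ℂ) :=
  ⨆ μ : ℝ, ⨆ _ : μ ≤ ω, Module.End.eigenspace (nLapL G) (μ : ℂ)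

/-- `f ∈ PW_ω(G)` iff the Bernstein inequality `‖𝓛ⁿ f‖ ≤ ωⁿ‖f‖` holds for
every natural `n`. -/
theorem mem_PW_iff_bernstein {V : Type*} [Fintype V] (G : SimpleGraph V)
    [DecidableRel G.Adj] (hdeg : ∀ v : V, 0 < G.degree v)
    (ω : ℝ) (hω : 0 ≤ ω) (f : V → ℂ) :
    f ∈ PW G ω ↔ ∀ n : ℕ,
      Real.sqrt (∑ v, ‖(nLapL G ^ n) f v‖ ^ 2) ≤ ω ^ n * Real.sqrt (∑ v, ‖f v‖ ^ 2) := by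
  classical
  have hsym := TT_symm G
  set N := Module.finrank ℂ (EuclideanSpace ℂ V) with hNdef
  have hn : Module.finrank ℂ (EuclideanSpace ℂ V) = N := rfl
  set b := hsym.eigenvectorBasis hn with hbdef
  set μ := hsym.eigenvalues hn with hμdef
  set fE : EuclideanSpace ℂ V := WithLp.toLp 2 f with hfE
  -- eigenvalues are nonnegative
  have hμ0 : ∀ i, 0 ≤ μ i := by
    intro i
    have h1 := hsym.apply_eigenvectorBasis hn i
    have h2 : (inner ℂ (TT G (b i)) (b i) : ℂ) = (μ i : ℂ) := by
      rw [hμdef]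
      rw [h1, inner_smul_left, inner_self_eq_norm_sq_to_K, b.orthonormal.1 i,
        RCLike.conj_ofReal]
      norm_num
    have h3 := inner_TT_re_nonneg G hdeg (b i)
    rw [h2, Complex.ofReal_re] at h3
    exact h3
  -- coordinates of powers
  have hrepr : ∀ (n : ℕ) (x : EuclideanSpace ℂ V) (i : Fin N),
      b.repr ((TT G ^ n) x) i = (μ i : ℂ) ^ n * b.repr x i := by
    intro n
    induction n with
    | zero => intro x i; simp
    | succ n ih =>
      intro x i
      have hstep : (TT G ^ (n + 1)) x = (TT G ^ n) (TT G x) := by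
        rw [pow_succ, Module.End.mul_apply]
      rw [hstep, ih, hμdef, hbdef, hsym.eigenvectorBasis_apply_self_apply hn x i]
      simp only [show ((RCLike.ofReal : ℝ → ℂ)) = (Complex.ofReal) from rfl]
      ring
  -- norms via coordinates
  have hnormsq : ∀ x : EuclideanSpace ℂ V, ‖x‖ ^ 2 = ∑ i, ‖b.repr x i‖ ^ 2 := by
    intro x
    rw [← LinearIsometryEquiv.norm_map b.repr x, EuclideanSpace.norm_eq, Real.sq_sqrt]
    exact Finset.sum_nonneg fun i _ => sq_nonneg _
  -- membership characterization
  have memiff : f ∈ PW G ω ↔ ∀ i : Fin N, ω < μ i → b.repr fE i = 0 := by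
    constructor
    · intro hf i hi
      rw [b.repr_apply_apply]
      refine Submodule.iSup_induction
        (motive := fun x : V → ℂ => (inner ℂ (b i) (WithLp.toLp 2 x) : ℂ) = 0) _ hf ?_ ?_ ?_
      · intro μ' x hx
        by_cases hμ' : μ' ≤ ω
        · rw [iSup_pos hμ'] at hx
          have hne : ((μ i : ℂ)) ≠ (μ' : ℂ) := by
            exact_mod_cast ne_of_gt (lt_of_le_of_lt hμ' hi)
          exact hsym.orthogonalFamily_eigenspaces hne
            ⟨b i, (hsym.hasEigenvector_eigenvectorBasis hn i).1⟩ ⟨WithLp.toLp 2 x, (mem_eig_iff G _ x).1 hx⟩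
        · rw [iSup_neg hμ'] at hx
          rw [Submodule.mem_bot] at hx
          rw [hx]
          exact inner_zero_right _
      · exact inner_zero_right _
      · intro x y hx hy
        rw [WithLp.toLp_add, inner_add_right, hx, hy, add_zero]
    · intro hc
      have hPWle : ∀ i : Fin N, WithLp.ofLp (b.repr fE i • b i) ∈ PW G ω := by
        intro i
        by_cases hi : ω < μ i
        · rw [hc i hi, zero_smul]
          exact zero_mem _
        · have h1 : (b i).ofLp ∈ Module.End.eigenspace (nLapL G) ((μ i : ℝ) : ℂ) :=
            (mem_eig_iff G _ _).2 (hsym.hasEigenvector_eigenvectorBasis hn i).1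
          have h2 : Module.End.eigenspace (nLapL G) ((μ i : ℝ) : ℂ) ≤ PW G ω :=
            le_iSup₂ (f := fun (μ' : ℝ) (_ : μ' ≤ ω) =>
              Module.End.eigenspace (nLapL G) (μ' : ℂ)) (μ i) (not_lt.1 hi)
          exact h2 (Submodule.smul_mem _ _ h1)
      have hsum := Submodule.sum_mem (PW G ω) (fun i (_ : i ∈ Finset.univ) => hPWle i)
      have := b.sum_repr fE
      have hf : f = ∑ i, WithLp.ofLp (b.repr fE i • b i) := by
        rw [← WithLp.ofLp_sum, this]
      rw [hf]
      exact hsum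
  rw [memiff]
  -- norm bridge
  have hbridge : ∀ n : ℕ, Real.sqrt (∑ v, ‖(nLapL G ^ n) f v‖ ^ 2) = ‖(TT G ^ n) fE‖ :=
    fun n => by rw [TT_pow_apply]; exact (EuclideanSpace.norm_eq (WithLp.toLp 2 ((nLapL G ^ n) f))).symm
  have hbridge0 : Real.sqrt (∑ v, ‖f v‖ ^ 2) = ‖fE‖ :=
    (EuclideanSpace.norm_eq fE).symm
  have hpowsq : ∀ (n : ℕ), ‖(TT G ^ n) fE‖ ^ 2 = ∑ i, (μ i ^ n) ^ 2 * ‖b.repr fE i‖ ^ 2 := by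
    intro n
    rw [hnormsq]
    refine Finset.sum_congr rfl fun i _ => ?_
    rw [hrepr n fE i, norm_mul, norm_pow, Complex.norm_real, Real.norm_of_nonneg (hμ0 i)]
    ring
  constructor
  · intro hc n
    rw [hbridge, hbridge0]
    have hsq : ‖(TT G ^ n) fE‖ ^ 2 ≤ (ω ^ n * ‖fE‖) ^ 2 := by
      rw [hpowsq, mul_pow, hnormsq fE, Finset.mul_sum]
      refine Finset.sum_le_sum fun i _ => ?_
      by_cases hi : ω < μ i
      · rw [hc i hi]
        simp
      · have h1 : μ i ^ n ≤ ω ^ n := pow_le_pow_left₀ (hμ0 i) (not_lt.1 hi) n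
        have h2 : (μ i ^ n) ^ 2 ≤ (ω ^ n) ^ 2 :=
          pow_le_pow_left₀ (pow_nonneg (hμ0 i) n) h1 2
        exact mul_le_mul_of_nonneg_right h2 (sq_nonneg _)
    calc ‖(TT G ^ n) fE‖ = Real.sqrt (‖(TT G ^ n) fE‖ ^ 2) :=
          (Real.sqrt_sq (norm_nonneg _)).symm
      _ ≤ Real.sqrt ((ω ^ n * ‖fE‖) ^ 2) := Real.sqrt_le_sqrt hsq
      _ = ω ^ n * ‖fE‖ := Real.sqrt_sq (by positivity)
  · intro hb i hi
    have hμpos : 0 < μ i := lt_of_le_of_lt hω hi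
    set r : ℝ := (ω / μ i) ^ 2 with hrdef
    have hr0 : 0 ≤ r := sq_nonneg _
    have hr1 : r < 1 := by
      have : ω / μ i < 1 := (div_lt_one hμpos).2 hi
      have h0 : 0 ≤ ω / μ i := div_nonneg hω hμpos.le
      calc r = (ω / μ i) ^ 2 := hrdef
        _ < 1 := pow_lt_one₀ h0 this (by norm_num)
    have hkey : ∀ n : ℕ, ‖b.repr fE i‖ ^ 2 ≤ r ^ n * ‖fE‖ ^ 2 := by
      intro n
      have h1 : (μ i ^ n) ^ 2 * ‖b.repr fE i‖ ^ 2 ≤ ‖(TT G ^ n) fE‖ ^ 2 := by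
        rw [hpowsq]
        exact Finset.single_le_sum (f := fun j => (μ j ^ n) ^ 2 * ‖b.repr fE j‖ ^ 2)
          (fun j _ => by positivity) (Finset.mem_univ i)
      have h2 : ‖(TT G ^ n) fE‖ ^ 2 ≤ (ω ^ n * ‖fE‖) ^ 2 := by
        have := hb n
        rw [hbridge, hbridge0] at this
        exact pow_le_pow_left₀ (norm_nonneg _) this 2
      have h3 : (μ i ^ n) ^ 2 * ‖b.repr fE i‖ ^ 2 ≤ (ω ^ n) ^ 2 * ‖fE‖ ^ 2 := by
        calc (μ i ^ n) ^ 2 * ‖b.repr fE i‖ ^ 2 ≤ (ω ^ n * ‖fE‖) ^ 2 := h1.trans h2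
          _ = (ω ^ n) ^ 2 * ‖fE‖ ^ 2 := by ring
      have hμn : (0 : ℝ) < (μ i ^ n) ^ 2 := by positivity
      rw [← le_div_iff₀' hμn] at h3
      calc ‖b.repr fE i‖ ^ 2 ≤ (ω ^ n) ^ 2 * ‖fE‖ ^ 2 / (μ i ^ n) ^ 2 := h3
        _ = r ^ n * ‖fE‖ ^ 2 := by
            rw [hrdef]
            field_simp
            have hμsq : (μ i ^ 2) ^ n = (μ i ^ n) ^ 2 := by ring
            rw [div_pow, hμsq, ← mul_div_assoc, eq_div_iff hμn.ne']
            ring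
    have htend : Filter.Tendsto (fun n : ℕ => r ^ n * ‖fE‖ ^ 2) Filter.atTop (nhds 0) := by
      have := (tendsto_pow_atTop_nhds_zero_of_lt_one hr0 hr1).mul_const (‖fE‖ ^ 2)
      simpa using this
    have hle : ‖b.repr fE i‖ ^ 2 ≤ 0 := ge_of_tendsto' htend hkey
    have : ‖b.repr fE i‖ ^ 2 = 0 := le_antisymm hle (sq_nonneg _)
    have : ‖b.repr fE i‖ = 0 := by
      exact pow_eq_zero_iff (by norm_num : 2 ≠ 0) |>.1 this
    exact norm_eq_zero.1 this
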